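/- Let A, B be bounded positive operators on a complex Hilbert space H with B ≪ A, and suppose there is no constant α ≥ 0 with B ≤ αA. Then there exists a nonzero bounded positive operator B′ with B′ ≤ B and B′ ⊥ A. -/

import Mathlib

open Filter

local notation "⟪" x ", " y "⟫" => @inner ℂ _ _ x y

variable {H : Type*} [NormedAddCommGroup H] [InnerProductSpace ℂ H] [CompleteSpace H]

/-- The quadratic-form order: `A ≤ B` iff `⟨Ax, x⟩ ≤ ⟨Bx, x⟩` for all `x`. -/
def QuadLE (A B : H →L[ℂ] H) : Prop :=
  ∀ x : H, (⟪A x, x⟫).re ≤ (⟪B x, x⟫).re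

/-- `B` is absolutely continuous with respect to `A` (`B ≪ A`): for every sequence `(xₙ)`,
if `⟨Axₙ, xₙ⟩ → 0` and `⟨B(xₙ−xₘ), xₙ−xₘ⟩ → 0` as `n, m → ∞`, then `⟨Bxₙ, xₙ⟩ → 0`. -/
def AbsCont (B A : H →L[ℂ] H) : Prop :=
  ∀ x : ℕ → H,
    Tendsto (fun n => (⟪A (x n), x n⟫).re) atTop (nhds 0) →
    (∀ ε > (0 : ℝ), ∃ N : ℕ, ∀ n ≥ N, ∀ m ≥ N,
      (⟪B (x n - x m), x n - x m⟫).re < ε) →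
    Tendsto (fun n => (⟪B (x n), x n⟫).re) atTop (nhds 0)

/-- `A` and `B` are mutually singular (`A ⊥ B`): the only bounded positive operator `C` with
`C ≤ A` and `C ≤ B` is `C = 0`. -/
def MutSing (A B : H →L[ℂ] H) : Prop :=
  ∀ C : H →L[ℂ] H, C.IsPositive → QuadLE C A → QuadLE C B → C = 0

/-- Real part of the inner self product is the squared norm. -/
lemma re_inner_self' (x : H) : (⟪x, x⟫).re = ‖x‖ ^ 2 := by
  have h : (⟪x, x⟫) = ((‖x‖ ^ 2 : ℝ) : ℂ) := by
    exact_mod_cast inner_self_eq_norm_sq_to_K (𝕜 := ℂ) x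
  rw [h, Complex.ofReal_re]

/-- Every positive operator has a positive square root (via the continuous functional
calculus). -/
lemma exists_sqrt' (T : H →L[ℂ] H) (hT : T.IsPositive) :
    ∃ R : H →L[ℂ] H, R.IsPositive ∧ ∀ x y : H, ⟪T x, y⟫ = ⟪R x, R y⟫ := by
  have hT' : (0 : H →L[ℂ] H) ≤ T := (ContinuousLinearMap.nonneg_iff_isPositive T).mpr hT
  have hpos : (CFC.sqrt T).IsPositive :=
    (ContinuousLinearMap.nonneg_iff_isPositive _).mp (CFC.sqrt_nonneg T)
  refine ⟨CFC.sqrt T, hpos, ?_⟩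
  have h : CFC.sqrt T * CFC.sqrt T = T := CFC.sqrt_mul_sqrt_self T hT'
  have hsym := hpos.1
  intro x y
  conv_lhs => rw [← h]
  exact hsym (CFC.sqrt T x) y

/-- A positive operator annihilates every vector on which its quadratic form vanishes. -/
lemma pos_form_zero (T : H →L[ℂ] H) (hT : T.IsPositive) {x : H}
    (hx : (⟪T x, x⟫).re ≤ 0) : T x = 0 := by
  obtain ⟨R, hRpos, hR⟩ := exists_sqrt' T hT
  have h1 : ‖R x‖ ^ 2 ≤ 0 := by
    have := hR x x
    rw [this, re_inner_self'] at hx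
    exact hx
  have h2 : R x = 0 := by
    have := sq_nonneg ‖R x‖
    have hn : ‖R x‖ ^ 2 = 0 := le_antisymm h1 (by positivity)
    simpa using pow_eq_zero_iff (n := 2) (by norm_num) |>.mp hn
  have h3 : ⟪T x, T x⟫ = 0 := by rw [hR x (T x), h2, inner_zero_left]
  exact inner_self_eq_zero.mp h3

/-- **Absolute continuity is not hereditary** (Proposition 7.1, Hilbert space case). If
`B ≪ A` but `B` is not dominated by any multiple `αA` of `A`, then there is a nonzero
positive operator `B′ ≤ B` with `B′ ⊥ A`. -/
theorem stmt_15 (A B : H →L[ℂ] H) (hA : A.IsPositive) (hB : B.IsPositive)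
    (hac : AbsCont B A)
    (hnotdom : ¬ ∃ α : ℝ, 0 ≤ α ∧ ∀ x : H, (⟪B x, x⟫).re ≤ α * (⟪A x, x⟫).re) :
    ∃ B' : H →L[ℂ] H, B' ≠ 0 ∧ B'.IsPositive ∧ QuadLE B' B ∧ MutSing B' A := by
  obtain ⟨R, hRpos, hR⟩ := exists_sqrt' B hB
  obtain ⟨S, hSpos, hS⟩ := exists_sqrt' A hA
  have hRsym : ∀ x y : H, ⟪R x, y⟫ = ⟪x, R y⟫ :=
    hRpos.1
  have hBx : ∀ x : H, (⟪B x, x⟫).re = ‖R x‖ ^ 2 := fun x => by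
    rw [hR x x, re_inner_self']
  have hAx : ∀ x : H, (⟪A x, x⟫).re = ‖S x‖ ^ 2 := fun x => by
    rw [hS x x, re_inner_self']
  -- Step 1: produce `v` with `‖v‖ ≤ 1` such that no multiple of the `A`-form dominates
  -- the rank-one form of `R v`.
  have key : ∃ v : H, ‖v‖ ≤ 1 ∧
      ∀ α : ℝ, 0 ≤ α → ∃ x : H, α * (⟪A x, x⟫).re < ‖⟪x, R v⟫‖ ^ 2 := by
    by_contra hcon
    push_neg at hcon
    apply hnotdom
    -- Banach–Steinhaus over the "A-unit ball"
    have hpt : ∀ v : H, ∃ C : ℝ, ∀ i : {x : H // ‖S x‖ ≤ 1},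
        ‖(innerSL ℂ (R i.1)) v‖ ≤ C := by
      intro v
      rcases eq_or_ne v 0 with rfl | hv
      · exact ⟨0, fun i => by simp⟩
      · have hnv : (0 : ℝ) < ‖v‖ := norm_pos_iff.mpr hv
        have hnvc : ((‖v‖ : ℝ) : ℂ) ≠ 0 := by
          simp [Complex.ofReal_ne_zero, ne_of_gt hnv]
        obtain ⟨α, hα0, hα⟩ := hcon ((((‖v‖ : ℝ) : ℂ))⁻¹ • v) (by
          rw [norm_smul, norm_inv, Complex.norm_real, Real.norm_eq_abs,
            abs_of_nonneg (norm_nonneg v)]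
          rw [inv_mul_cancel₀ (ne_of_gt hnv)])
        refine ⟨‖v‖ * Real.sqrt α, fun i => ?_⟩
        have hA1 : (⟪A i.1, i.1⟫).re ≤ 1 := by
          rw [hAx]
          nlinarith [i.2, norm_nonneg (S i.1)]
        have h1 : ‖⟪i.1, R ((((‖v‖ : ℝ) : ℂ))⁻¹ • v)⟫‖ ^ 2 ≤ α := by
          refine (hα i.1).trans ?_
          nlinarith [hA1, hα0, hA.inner_nonneg_left i.1]
        have h2 : ‖⟪i.1, R ((((‖v‖ : ℝ) : ℂ))⁻¹ • v)⟫‖ ≤ Real.sqrt α := by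
          have := Real.sqrt_le_sqrt h1
          rwa [Real.sqrt_sq (norm_nonneg _)] at this
        have h3 : (innerSL ℂ (R i.1)) v = ⟪R i.1, v⟫ := rfl
        have h4 : ⟪R i.1, v⟫ = ((‖v‖ : ℝ) : ℂ) * ⟪i.1, R ((((‖v‖ : ℝ) : ℂ))⁻¹ • v)⟫ := by
          rw [map_smul, inner_smul_right, hRsym]
          rw [← mul_assoc, mul_inv_cancel₀ hnvc, one_mul]
        rw [h3, h4, norm_mul, Complex.norm_real, Real.norm_eq_abs,
          abs_of_nonneg (norm_nonneg v)]
        exact mul_le_mul_of_nonneg_left h2 (norm_nonneg v)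
    obtain ⟨C, hC⟩ := banach_steinhaus hpt
    have hRS : ∀ x : H, ‖S x‖ ≤ 1 → ‖R x‖ ≤ C := by
      intro x hx
      have := hC ⟨x, hx⟩
      rwa [innerSL_apply_norm] at this
    have hC0 : 0 ≤ C := le_trans (norm_nonneg (R 0)) (hRS 0 (by simp))
    have hbound : ∀ x : H, ‖R x‖ ≤ C * ‖S x‖ := by
      intro x
      rcases eq_or_lt_of_le (norm_nonneg (S x)) with h0 | h0
      · -- ‖S x‖ = 0
        have hS0 : ‖S x‖ = 0 := h0.symm
        rw [hS0, mul_zero]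
        by_contra hRx
        push_neg at hRx
        have hRxpos : 0 < ‖R x‖ := hRx
        have ht : ∀ t : ℝ, 0 < t → t * ‖R x‖ ≤ C := by
          intro t ht
          have h1 : ‖S (((t : ℝ) : ℂ) • x)‖ ≤ 1 := by
            rw [map_smul, norm_smul, Complex.norm_real, Real.norm_eq_abs, hS0, mul_zero]
            norm_num
          have := hRS _ h1
          rwa [map_smul, norm_smul, Complex.norm_real, Real.norm_eq_abs,
            abs_of_pos ht] at this
        have := ht ((C + 1) / ‖R x‖) (by positivity)
        rw [div_mul_cancel₀ _ (ne_of_gt hRxpos)] at this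
        linarith
      · -- 0 < ‖S x‖
        have h1 : ‖S ((((‖S x‖ : ℝ) : ℂ))⁻¹ • x)‖ ≤ 1 := by
          rw [map_smul, norm_smul, norm_inv, Complex.norm_real, Real.norm_eq_abs,
            abs_of_pos h0, inv_mul_cancel₀ (ne_of_gt h0)]
        have := hRS _ h1
        rw [map_smul, norm_smul, norm_inv, Complex.norm_real, Real.norm_eq_abs,
          abs_of_pos h0] at this
        calc ‖R x‖ = ‖S x‖ * (‖S x‖⁻¹ * ‖R x‖) := by
              field_simp
          _ ≤ ‖S x‖ * C := mul_le_mul_of_nonneg_left this (le_of_lt h0)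
          _ = C * ‖S x‖ := mul_comm _ _
    refine ⟨C ^ 2, sq_nonneg C, fun x => ?_⟩
    rw [hBx, hAx]
    nlinarith [hbound x, norm_nonneg (S x), norm_nonneg (R x), hC0]
  -- Step 2: build the rank-one operator
  obtain ⟨v, hv1, hv⟩ := key
  set w := R v with hwdef
  have hwv : ∀ x : H, ⟪w, x⟫ = ⟪v, R x⟫ := fun x => hRsym v x
  have hwne : w ≠ 0 := by
    intro h0
    obtain ⟨x, hx⟩ := hv 0 le_rfl
    rw [h0] at hx
    simp at hx
  set B' : H →L[ℂ] H := (innerSL ℂ w).smulRight w with hB'def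
  have hB'apply : ∀ x : H, B' x = ⟪w, x⟫ • w := fun x => rfl
  have hB'form : ∀ x : H, ⟪B' x, x⟫ = ((‖⟪w, x⟫‖ : ℝ) : ℂ) ^ 2 := by
    intro x
    rw [hB'apply, inner_smul_left, RCLike.conj_mul]
    norm_cast
  have hB'formre : ∀ x : H, (⟪B' x, x⟫).re = ‖⟪w, x⟫‖ ^ 2 := by
    intro x
    rw [hB'form, ← Complex.ofReal_pow, Complex.ofReal_re]
  have hwwne : ⟪w, w⟫ ≠ 0 := inner_self_ne_zero.mpr hwne
  refine ⟨B', ?_, ?_, ?_, ?_⟩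
  · -- B' ≠ 0
    intro h
    have h2 : B' w = 0 := by rw [h]; rfl
    rw [hB'apply] at h2
    rcases smul_eq_zero.mp h2 with h3 | h3
    · exact hwwne h3
    · exact hwne h3
  · -- positive
    constructor
    · 
      intro x y
      show ⟪B' x, y⟫ = ⟪x, B' y⟫
      rw [hB'apply, hB'apply, inner_smul_left, inner_smul_right, ← inner_conj_symm x w]
      ring
    · intro x
      show 0 ≤ RCLike.re ⟪B' x, x⟫
      rw [RCLike.re_to_complex, hB'formre]
      positivity
  · -- QuadLE B' B
    intro x
    rw [hB'formre, hBx, hwv]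
    have h0 : ‖(⟪v, R x⟫ : ℂ)‖ ≤ ‖v‖ * ‖R x‖ := norm_inner_le_norm (𝕜 := ℂ) v (R x)
    have h1 : ‖(⟪v, R x⟫ : ℂ)‖ ≤ ‖R x‖ := by nlinarith [norm_nonneg (R x)]
    exact pow_le_pow_left₀ (norm_nonneg _) h1 2
  · -- MutSing B' A
    intro C hC hCB hCA
    have hCsym : ∀ x y : H, ⟪C x, y⟫ = ⟪x, C y⟫ :=
      hC.1
    have hker : ∀ x : H, ⟪w, x⟫ = 0 → C x = 0 := by
      intro x hx
      apply pos_form_zero C hC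
      have h1 := hCB x
      rw [hB'formre, hx] at h1
      simpa using h1
    have hproj : ∀ y : H, ⟪w, y - (⟪w, y⟫ / ⟪w, w⟫) • w⟫ = 0 := by
      intro y
      rw [inner_sub_right, inner_smul_right, div_mul_cancel₀ _ hwwne, sub_self]
    have hCw : C w = 0 := by
      by_contra hCw0
      have ht0 : 0 < (⟪C w, w⟫).re := by
        rcases lt_or_eq_of_le (hC.re_inner_nonneg_left w) with h | h
        · rwa [RCLike.re_to_complex] at h
        · exact absurd (pos_form_zero C hC (le_of_eq (by rw [← RCLike.re_to_complex, ← h])))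
            hCw0
      set t : ℝ := (⟪C w, w⟫).re with htdef
      have hw4 : (0 : ℝ) < ‖w‖ ^ 4 := by
        have : (0 : ℝ) < ‖w‖ := norm_pos_iff.mpr hwne
        positivity
      obtain ⟨x, hx⟩ := hv (‖w‖ ^ 4 / t) (le_of_lt (by positivity))
      -- compute the C-form at x
      set a : ℂ := ⟪w, x⟫ / ⟪w, w⟫ with hadef
      have hxa : ⟪w, x - a • w⟫ = 0 := hproj x
      have hCxa : C (x - a • w) = 0 := hker _ hxa
      have hCx : C x = a • C w := by
        have h1 : C x - a • C w = 0 := by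
          rw [← map_smul, ← map_sub]; exact hCxa
        linear_combination (norm := module) h1
      have hform : (⟪C x, x⟫).re = ‖a‖ ^ 2 * t := by
        have hdc : x = a • w + (x - a • w) := by abel
        have h2 : ⟪C w, x - a • w⟫ = 0 := by
          rw [hCsym, hCxa, inner_zero_right]
        calc (⟪C x, x⟫).re = (⟪a • C w, a • w + (x - a • w)⟫).re := by
              rw [← hdc, hCx]
          _ = ((starRingEnd ℂ a * a) * ⟪C w, w⟫).re := by
              rw [inner_smul_left, inner_add_right, inner_smul_right, h2, add_zero]
              ring_nf
          _ = (((‖a‖ ^ 2 : ℝ) : ℂ) * ⟪C w, w⟫).re := by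
              rw [RCLike.conj_mul]; norm_cast
          _ = ‖a‖ ^ 2 * t := by rw [Complex.re_ofReal_mul]
      have ha : ‖a‖ ^ 2 = ‖⟪w, x⟫‖ ^ 2 / ‖w‖ ^ 4 := by
        rw [hadef, norm_div]
        rw [inner_self_eq_norm_sq_to_K (𝕜 := ℂ) w]
        rw [norm_pow, RCLike.norm_ofReal, abs_of_nonneg (norm_nonneg w), div_pow]
        ring_nf
      -- combine with C ≤ A and the choice of x
      have hAform := hCA x
      rw [hform, ha, div_mul_eq_mul_div] at hAform
      have hx' : ‖w‖ ^ 4 * (⟪A x, x⟫).re < ‖⟪w, x⟫‖ ^ 2 * t := by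
        have h5 : ‖⟪x, w⟫‖ = ‖⟪w, x⟫‖ := norm_inner_symm x w
        rw [div_mul_eq_mul_div, div_lt_iff₀ ht0] at hx
        rw [h5] at hx
        linarith
      have hA0 : 0 ≤ (⟪A x, x⟫).re := by
        have := hA.re_inner_nonneg_left x
        rwa [RCLike.re_to_complex] at this
      rw [div_le_iff₀ hw4] at hAform
      nlinarith
    -- conclude C = 0
    ext y
    have h1 : C (y - (⟪w, y⟫ / ⟪w, w⟫) • w) = 0 := hker _ (hproj y)
    rw [map_sub, map_smul, hCw, smul_zero, sub_zero] at h1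
    simpa using h1
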